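/- For n ≥ 2, the minimum cardinality N(n) of a simply 3-suitable set of permutations of [n] satisfies N(n) ≥ ⌈log₂ log₂ n⌉ + 1. -/

import Mathlib

open Function Finset in



theorem my_erdos_szekeres {α : Type*} [LinearOrder α] {r s n : ℕ} {f : Fin n → α} (hn : r * s < n) (hf : Injective f) :
    (∃ t : Finset (Fin n), r < t.card ∧ StrictMonoOn f ↑t) ∨
      ∃ t : Finset (Fin n), s < t.card ∧ StrictAntiOn f ↑t := by
  let inc_sequences_ending_in : Fin n → Finset (Finset (Fin n)) := fun i =>
    univ.powerset.filter fun t => Finset.max t = i ∧ StrictMonoOn f ↑t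
  let dec_sequences_ending_in : Fin n → Finset (Finset (Fin n)) := fun i =>
    univ.powerset.filter fun t => Finset.max t = i ∧ StrictAntiOn f ↑t
  have inc_i : ∀ i, {i} ∈ inc_sequences_ending_in i := fun i => by
    simp [inc_sequences_ending_in, StrictMonoOn]
  have dec_i : ∀ i, {i} ∈ dec_sequences_ending_in i := fun i => by
    simp [dec_sequences_ending_in, StrictAntiOn]
  let ab' : Fin n → ℕ × ℕ := by
    intro i
    apply
      (max' ((inc_sequences_ending_in i).image card) (Nonempty.image ⟨{i}, inc_i i⟩ _),
        max' ((dec_sequences_ending_in i).image card) (Nonempty.image ⟨{i}, dec_i i⟩ _))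
  generalize hab : ab' = ab
  rsuffices ⟨i, hi⟩ : ∃ i, r < (ab i).1 ∨ s < (ab i).2
  · refine Or.imp ?_ ?_ hi
    on_goal 1 =>
      have : (ab i).1 ∈ image card (inc_sequences_ending_in i) := by
        simp only [← hab]; exact max'_mem _ (Nonempty.image ⟨{i}, inc_i i⟩ _)
    on_goal 2 =>
      have : (ab i).2 ∈ image card (dec_sequences_ending_in i) := by
        simp only [← hab]; exact max'_mem _ (Nonempty.image ⟨{i}, dec_i i⟩ _)
    all_goals
      intro hi
      rw [mem_image] at this
      obtain ⟨t, ht₁, ht₂⟩ := this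
      refine ⟨t, by rwa [ht₂], ?_⟩
      rw [mem_filter] at ht₁
      apply ht₁.2.2
  have : Injective ab := by
    simp only [← hab]
    apply Function.Injective.of_lt_imp_ne
    intro i j k q
    injection q with q₁ q₂
    cases lt_or_gt_of_ne fun _ => ne_of_lt ‹i < j› (hf ‹f i = f j›)
    on_goal 1 =>
      apply ne_of_lt _ q₁
      have : (ab' i).1 ∈ image card (inc_sequences_ending_in i) := by exact max'_mem _ (Nonempty.image ⟨{i}, inc_i i⟩ _)
    on_goal 2 =>
      apply ne_of_lt _ q₂
      have : (ab' i).2 ∈ image card (dec_sequences_ending_in i) := by exact max'_mem _ (Nonempty.image ⟨{i}, dec_i i⟩ _)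
    all_goals
      rw [Nat.lt_iff_add_one_le]
      apply le_max'
      rw [mem_image] at this ⊢
      rcases this with ⟨t, ht₁, ht₂⟩
      rw [mem_filter] at ht₁
      have : t.max = i := by simp only [ht₁.2.1]
      refine ⟨insert j t, ?_, ?_⟩
      · rw [mem_filter]
        refine ⟨?_, ?_, ?_⟩
        · rw [mem_powerset]; apply subset_univ
        · convert max_insert (a := j) (s := t)
          rw [ht₁.2.1, max_eq_left]
          apply WithBot.coe_le_coe.mpr (le_of_lt ‹i < j›)
        simp only [StrictMonoOn, StrictAntiOn, coe_insert, Set.mem_insert_iff, mem_coe]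
        rintro x ⟨rfl | _⟩ y ⟨rfl | _⟩ _
        · apply (irrefl _ ‹j < j›).elim
        · exfalso
          apply not_le_of_gt (_root_.trans ‹i < j› ‹j < y›) (le_max_of_eq ‹y ∈ t› ‹t.max = i›)
        · first
          | apply lt_of_le_of_lt _ ‹f i < f j›
          | apply lt_of_lt_of_le ‹f j < f i› _
          rcases lt_or_eq_of_le (le_max_of_eq ‹x ∈ t› ‹t.max = i›) with (_ | rfl)
          · apply le_of_lt (ht₁.2.2 ‹x ∈ t› (mem_of_max ‹t.max = i›) ‹x < i›)
          · rfl
        · apply ht₁.2.2 ‹x ∈ t› ‹y ∈ t› ‹x < y›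
      · rw [card_insert_of_notMem, ht₂]
        intro
        apply not_le_of_gt ‹i < j› (le_max_of_eq ‹j ∈ t› ‹t.max = i›)
  by_contra! q
  let ran : Finset (ℕ × ℕ) := (range r).image Nat.succ ×ˢ (range s).image Nat.succ
  have : image ab univ ⊆ ran := by
    rintro ⟨x₁, x₂⟩
    simp only [ran, mem_image, exists_prop, mem_range, mem_univ, mem_product, true_and,
      Prod.ext_iff]
    rintro ⟨i, rfl, rfl⟩
    specialize q i
    have z : 1 ≤ (ab i).1 ∧ 1 ≤ (ab i).2 := by
      simp only [← hab]
      constructor <;>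
        · apply le_max'
          rw [mem_image]
          exact ⟨{i}, by solve_by_elim, card_singleton i⟩
    exact ⟨⟨(ab i).1 - 1, by omega⟩, (ab i).2 - 1, by omega⟩
  apply not_le_of_gt hn
  simpa [ran, Nat.succ_injective, card_image_of_injective, ‹Injective ab›] using card_le_card this

open Function Finset in
lemma core (k : ℕ) : ∀ {n : ℕ} (T : Finset (Fin n)) (g : Fin (k + 1) → Equiv.Perm (Fin n)),
    2 ^ 2 ^ k < T.card →
    ∃ a ∈ T, ∃ b ∈ T, ∃ m ∈ T, ∀ i,
      (g i a < g i m ∧ g i m < g i b) ∨ (g i b < g i m ∧ g i m < g i a) := by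
  induction k with
  | zero =>
    intro n T g hT
    set u := T.image (g 0) with hu
    have hucard : u.card = T.card := card_image_of_injective _ (g 0).injective
    have hune : u.Nonempty := by
      rw [← card_pos, hucard]; omega
    set lo := u.min' hune
    set hi := u.max' hune
    have hv : ((u.erase lo).erase hi).Nonempty := by
      rw [← card_pos]
      have h1 := card_erase_le (s := u.erase lo) (a := hi)
      have h2 := card_erase_le (s := u) (a := lo)
      have h3 := card_le_card (erase_subset lo u)
      have e1 : (u.erase lo).card = u.card - 1 := card_erase_of_mem (min'_mem _ _)
      have e2 : ((u.erase lo).erase hi).card ≥ (u.erase lo).card - 1 := by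
        rcases em (hi ∈ u.erase lo) with h | h
        · rw [card_erase_of_mem h]
        · rw [erase_eq_of_notMem h]; omega
      omega
    obtain ⟨x, hx⟩ := hv
    have hxlo : x ≠ lo := ne_of_mem_erase (mem_of_mem_erase hx)
    have hxhi : x ≠ hi := ne_of_mem_erase hx
    have hxu : x ∈ u := mem_of_mem_erase (mem_of_mem_erase hx)
    have h1 : lo < x := lt_of_le_of_ne (u.min'_le x hxu) (Ne.symm hxlo)
    have h2 : x < hi := lt_of_le_of_ne (u.le_max' x hxu) hxhi
    obtain ⟨a, haT, ha⟩ := mem_image.mp (u.min'_mem hune)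
    obtain ⟨b, hbT, hb⟩ := mem_image.mp (u.max'_mem hune)
    obtain ⟨m, hmT, hm⟩ := mem_image.mp hxu
    refine ⟨a, haT, b, hbT, m, hmT, fun i => ?_⟩
    have hi0 : i = 0 := Fin.fin_one_eq_zero i
    subst hi0
    left
    rw [ha, hb, hm]
    exact ⟨h1, h2⟩
  | succ k ih =>
    intro n T g hT
    have hT' : 2 ^ 2 ^ k * 2 ^ 2 ^ k < T.card := by
      have : 2 ^ 2 ^ (k + 1) = 2 ^ 2 ^ k * 2 ^ 2 ^ k := by
        rw [← pow_add]; congr 1; rw [pow_succ]; ring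
      omega
    set u := T.image (g 0) with hu
    have hucard : u.card = T.card := card_image_of_injective _ (g 0).injective
    let e := u.orderIsoOfFin hucard
    let f : Fin T.card → Fin n := fun j => g 1 ((g 0).symm (e j))
    have hcoe_inj : Injective fun j : Fin T.card => ((e j : Fin n)) := fun j j' h => by
      apply e.injective; exact Subtype.ext h
    have hfinj : Injective f := fun j j' h => by
      apply hcoe_inj
      exact (g 0).symm.injective ((g 1).injective h)
    have hmem : ∀ j : Fin T.card, (g 0).symm (e j) ∈ T := by
      intro j
      have : (e j : Fin n) ∈ u := (e j).2
      obtain ⟨a, haT, ha⟩ := mem_image.mp this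
      rw [← ha, Equiv.symm_apply_apply]
      exact haT
    -- get a monotone or antitone chunk
    obtain ⟨t, ht, hmono⟩ :
        ∃ t : Finset (Fin T.card), 2 ^ 2 ^ k < t.card ∧
          (StrictMonoOn f ↑t ∨ StrictAntiOn f ↑t) := by
      rcases my_erdos_szekeres hT' hfinj with ⟨t, ht, h⟩ | ⟨t, ht, h⟩
      · exact ⟨t, ht, Or.inl h⟩
      · exact ⟨t, ht, Or.inr h⟩
    set C := t.image (fun j => (g 0).symm (e j)) with hC
    have hCT : C ⊆ T := by
      intro x hx
      obtain ⟨j, _, rfl⟩ := mem_image.mp hx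
      exact hmem j
    have hCinj : Injective fun j : Fin T.card => (g 0).symm (e j) := fun j j' h =>
      hcoe_inj ((g 0).symm.injective h)
    have hCcard : C.card = t.card := card_image_of_injective _ hCinj
    obtain ⟨a, haC, b, hbC, m, hmC, hbet⟩ :=
      ih C (fun i => g i.succ) (by rw [hCcard]; exact ht)
    obtain ⟨ja, hja, haj⟩ := mem_image.mp haC
    obtain ⟨jb, hjb, hbj⟩ := mem_image.mp hbC
    obtain ⟨jm, hjm, hmj⟩ := mem_image.mp hmC
    have g0a : g 0 a = (e ja : Fin n) := by rw [← haj, Equiv.apply_symm_apply]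
    have g0b : g 0 b = (e jb : Fin n) := by rw [← hbj, Equiv.apply_symm_apply]
    have g0m : g 0 m = (e jm : Fin n) := by rw [← hmj, Equiv.apply_symm_apply]
    have g1a : g 1 a = f ja := by rw [← haj]
    have g1b : g 1 b = f jb := by rw [← hbj]
    have g1m : g 1 m = f jm := by rw [← hmj]
    have hbet1 := hbet 0
    have hsucc0 : (0 : Fin (k + 1)).succ = (1 : Fin (k + 2)) := rfl
    rw [hsucc0] at hbet1
    have key : (g 0 a < g 0 m ∧ g 0 m < g 0 b) ∨ (g 0 b < g 0 m ∧ g 0 m < g 0 a) := by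
      have elt : ∀ {j j' : Fin T.card}, (e j : Fin n) < e j' ↔ j < j' := by
        intro j j'
        rw [Subtype.coe_lt_coe, e.lt_iff_lt]
      rcases hmono with hm' | hm'
      · have flt : ∀ {j j'}, j ∈ t → j' ∈ t → (f j < f j' ↔ j < j') := fun hj hj' =>
          hm'.lt_iff_lt hj hj'
        rcases hbet1 with ⟨u1, u2⟩ | ⟨u1, u2⟩
        · left
          rw [g1a, g1m] at u1; rw [g1m, g1b] at u2
          rw [g0a, g0m, g0b, elt, elt]
          exact ⟨(flt hja hjm).mp u1, (flt hjm hjb).mp u2⟩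
        · right
          rw [g1b, g1m] at u1; rw [g1m, g1a] at u2
          rw [g0a, g0m, g0b, elt, elt]
          exact ⟨(flt hjb hjm).mp u1, (flt hjm hja).mp u2⟩
      · have flt : ∀ {j j'}, j ∈ t → j' ∈ t → (f j < f j' ↔ j' < j) := fun hj hj' =>
          hm'.lt_iff_gt hj hj'
        rcases hbet1 with ⟨u1, u2⟩ | ⟨u1, u2⟩
        · right
          rw [g1a, g1m] at u1; rw [g1m, g1b] at u2
          rw [g0a, g0m, g0b, elt, elt]
          exact ⟨(flt hjm hjb).mp u2, (flt hja hjm).mp u1⟩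
        · left
          rw [g1b, g1m] at u1; rw [g1m, g1a] at u2
          rw [g0a, g0m, g0b, elt, elt]
          exact ⟨(flt hjm hja).mp u2, (flt hjb hjm).mp u1⟩
    refine ⟨a, hCT haC, b, hCT hbC, m, hCT hmC, fun i => ?_⟩
    refine Fin.cases ?_ ?_ i
    · exact key
    · intro j
      exact hbet j



/-- `β(s,t,σ)`: the set of `x` with `σ⁻¹(x)` strictly between `σ⁻¹(s)` and `σ⁻¹(t)`. -/
def beta {n : ℕ} (σ : Equiv.Perm (Fin n)) (s t : Fin n) : Set (Fin n) :=
  {x | (σ.symm s < σ.symm x ∧ σ.symm x < σ.symm t) ∨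
       (σ.symm t < σ.symm x ∧ σ.symm x < σ.symm s)}

/-- A set of permutations of `[n]` is simply 3-suitable if for every pair `s, t`,
the intersection over `σ ∈ S` of `β(s,t,σ)` is empty. -/
def SimplySuitable {n : ℕ} (S : Set (Equiv.Perm (Fin n))) : Prop :=
  ∀ s t : Fin n, ⋂ σ ∈ S, beta σ s t = ∅

/-- `N(n)`: the minimum cardinality of a simply 3-suitable set of permutations of `[n]`. -/
noncomputable def Nsimply (n : ℕ) : ℕ :=
  sInf {k | ∃ S : Finset (Equiv.Perm (Fin n)), S.card = k ∧ SimplySuitable (↑S : Set (Equiv.Perm (Fin n)))}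


/-- For `n ≥ 2`, `N(n) ≥ ⌈log₂ log₂ n⌉ + 1`. -/


theorem Nsimply_lower_bound (n : ℕ) (hn : 2 ≤ n) :
    Nat.clog 2 (Nat.clog 2 n) + 1 ≤ Nsimply n := by
  have hz : (0 : ℕ) < n := by omega
  -- the set of all permutations is simply suitable
  have hsu : SimplySuitable ((Finset.univ : Finset (Equiv.Perm (Fin n))) : Set (Equiv.Perm (Fin n))) := by
    intro s t
    rw [Set.eq_empty_iff_forall_notMem]
    intro x hx
    rw [Set.mem_iInter₂] at hx
    have hx0 := hx (Equiv.swap x ⟨0, hz⟩) (by simp)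
    simp only [beta, Set.mem_setOf_eq, Equiv.symm_swap, Equiv.swap_apply_left] at hx0
    rcases hx0 with ⟨h1, _⟩ | ⟨h1, _⟩ <;>
      · rw [Fin.lt_def] at h1; simp only [] at h1; omega
  refine le_csInf ⟨(Finset.univ : Finset (Equiv.Perm (Fin n))).card, Finset.univ, rfl, hsu⟩ ?_
  rintro k ⟨S, rfl, hsuit⟩
  -- S is nonempty
  have hS : S.Nonempty := by
    rw [Finset.nonempty_iff_ne_empty]
    rintro rfl
    have h := hsuit ⟨0, hz⟩ ⟨0, hz⟩
    simp only [Finset.coe_empty, Set.mem_empty_iff_false, Set.iInter_of_empty,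
      Set.iInter_univ] at h
    have h2 : (Set.univ : Set (Fin n)) = ∅ := by simpa using h
    exact (Set.univ_eq_empty_iff.mp h2).false ⟨0, hz⟩
  have hk1 : 1 ≤ S.card := Finset.card_pos.mpr hS
  -- main bound : n ≤ 2 ^ 2 ^ (S.card - 1)
  have hmain : n ≤ 2 ^ 2 ^ (S.card - 1) := by
    by_contra hlt
    push_neg at hlt
    obtain ⟨k', hc⟩ : ∃ k', S.card = k' + 1 := ⟨S.card - 1, by omega⟩
    let eS : Fin (k' + 1) ≃ {x // x ∈ S} := (S.equivFin.trans (finCongr hc)).symm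
    let g : Fin (k' + 1) → Equiv.Perm (Fin n) := fun i => ((eS i : Equiv.Perm (Fin n))).symm
    have hT : 2 ^ 2 ^ k' < (Finset.univ : Finset (Fin n)).card := by
      rw [Finset.card_univ, Fintype.card_fin]
      have : S.card - 1 = k' := by omega
      rw [this] at hlt
      exact hlt
    obtain ⟨a, -, b, -, m, -, hbet⟩ := core k' Finset.univ g hT
    have hmem : m ∈ ⋂ σ ∈ (↑S : Set (Equiv.Perm (Fin n))), beta σ a b := by
      rw [Set.mem_iInter₂]
      intro σ hσ
      have hσ' : σ ∈ S := hσ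
      have hgi : g (eS.symm ⟨σ, hσ'⟩) = σ.symm := by
        show ((eS (eS.symm ⟨σ, hσ'⟩) : Equiv.Perm (Fin n))).symm = σ.symm
        rw [eS.apply_symm_apply]
      have hb := hbet (eS.symm ⟨σ, hσ'⟩)
      rw [hgi] at hb
      exact hb
    rw [hsuit a b] at hmem
    exact hmem
  have h1 : Nat.clog 2 n ≤ 2 ^ (S.card - 1) := (Nat.clog_le_iff_le_pow one_lt_two).mpr hmain
  have h2 : Nat.clog 2 (Nat.clog 2 n) ≤ S.card - 1 := (Nat.clog_le_iff_le_pow one_lt_two).mpr h1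
  omega
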